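/- Let t₁, ..., t_k be positive rationals and n₁, ..., n_k positive integers. There exists a positive rational x such that t_m·x is an n_m-th power of a rational for all m, if and only if for all κ ≠ λ, t_κ·t_λ^{-1} is a gcd(n_κ, n_λ)-th power of a rational. -/

import Mathlib

lemma myPosWit {q y : ℚ} {n : ℕ} (hq : 0 < q) (h : q = y ^ n) :
    ∃ z : ℚ, 0 < z ∧ q = z ^ n := by
  rcases Nat.eq_zero_or_pos n with rfl | hn
  · exact ⟨1, one_pos, by simpa using h⟩
  · have hy : y ≠ 0 := by
      rintro rfl
      rw [zero_pow hn.ne'] at h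
      exact hq.ne' h
    exact ⟨|y|, abs_pos.2 hy, by rw [← abs_pow, ← h, abs_of_pos hq]⟩

lemma myNatPow {N n : ℕ} (hN : N ≠ 0) (hn : n ≠ 0) (h : ∀ p, n ∣ N.factorization p) :
    ∃ e : ℕ, N = e ^ n := by
  refine ⟨Nat.floorRoot n N, Nat.dvd_antisymm ?_ Nat.floorRoot_pow_dvd⟩
  have hfr : Nat.floorRoot n N ≠ 0 := Nat.floorRoot_ne_zero.2 ⟨hn, hN⟩
  rw [← Nat.factorization_le_iff_dvd hN (pow_ne_zero _ hfr)]
  intro p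
  rw [Nat.factorization_pow, Finsupp.smul_apply, Nat.factorization_floorRoot,
    Finsupp.floorDiv_apply, Nat.floorDiv_eq_div, smul_eq_mul, Nat.mul_div_cancel' (h p)]

lemma myNatLcm {N a b : ℕ} (hN : N ≠ 0) (ha : a ≠ 0) (hb : b ≠ 0)
    (h1 : ∃ c, N = c ^ a) (h2 : ∃ d, N = d ^ b) : ∃ e, N = e ^ Nat.lcm a b := by
  apply myNatPow hN (Nat.lcm_ne_zero ha hb)
  intro p
  apply Nat.lcm_dvd
  · obtain ⟨c, rfl⟩ := h1
    rw [Nat.factorization_pow, Finsupp.smul_apply]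
    exact Dvd.intro _ rfl
  · obtain ⟨d, rfl⟩ := h2
    rw [Nat.factorization_pow, Finsupp.smul_apply]
    exact Dvd.intro _ rfl

lemma myGcdLcmDistribDvd {a b c : ℕ} (ha : a ≠ 0) (hb : b ≠ 0) (hc : c ≠ 0) :
    Nat.gcd a (Nat.lcm b c) ∣ Nat.lcm (Nat.gcd a b) (Nat.gcd a c) := by
  have hbc : Nat.lcm b c ≠ 0 := Nat.lcm_ne_zero hb hc
  have hab : Nat.gcd a b ≠ 0 := Nat.gcd_ne_zero_left ha
  have hac : Nat.gcd a c ≠ 0 := Nat.gcd_ne_zero_left ha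
  rw [← Nat.factorization_le_iff_dvd (Nat.gcd_ne_zero_left ha) (Nat.lcm_ne_zero hab hac)]
  intro p
  rw [Nat.factorization_gcd ha hbc, Nat.factorization_lcm hab hac, Nat.factorization_lcm hb hc,
    Nat.factorization_gcd ha hb, Nat.factorization_gcd ha hc,
    Finsupp.inf_apply, Finsupp.sup_apply, Finsupp.sup_apply, Finsupp.inf_apply, Finsupp.inf_apply]
  exact le_of_eq (inf_sup_left _ _ _)

lemma myRatLcm {q : ℚ} (hq : 0 < q) {a b : ℕ} (ha : a ≠ 0) (hb : b ≠ 0)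
    (h1 : ∃ y : ℚ, q = y ^ a) (h2 : ∃ z : ℚ, q = z ^ b) :
    ∃ w : ℚ, q = w ^ Nat.lcm a b := by
  obtain ⟨y, hy⟩ := h1
  obtain ⟨z, hz⟩ := h2
  have hnum0 : q.num.natAbs ≠ 0 := Int.natAbs_ne_zero.2 (Rat.num_ne_zero.2 hq.ne')
  obtain ⟨e, he⟩ := myNatLcm hnum0 ha hb
    ⟨y.num.natAbs, by rw [hy, Rat.num_pow, Int.natAbs_pow]⟩
    ⟨z.num.natAbs, by rw [hz, Rat.num_pow, Int.natAbs_pow]⟩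
  obtain ⟨f, hf⟩ := myNatLcm q.den_ne_zero ha hb
    ⟨y.den, by rw [hy, Rat.den_pow]⟩ ⟨z.den, by rw [hz, Rat.den_pow]⟩
  refine ⟨(e : ℚ) / (f : ℚ), ?_⟩
  have hnum : (0:ℤ) ≤ q.num := Rat.num_nonneg.2 hq.le
  rw [div_pow, ← Nat.cast_pow, ← Nat.cast_pow, ← he, ← hf]
  conv_lhs => rw [← Rat.num_div_den q]
  rw [Nat.cast_natAbs, abs_of_nonneg hnum]

lemma myFinsetLcmNeZero {ι : Type*} [DecidableEq ι] (s : Finset ι) (f : ι → ℕ)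
    (hf : ∀ i ∈ s, f i ≠ 0) : s.lcm f ≠ 0 := by
  induction s using Finset.induction with
  | empty => simp
  | insert _ _ hi ih =>
    rw [Finset.lcm_insert, lcm_eq_nat_lcm]
    exact Nat.lcm_ne_zero (hf _ (Finset.mem_insert_self _ _))
      (ih fun i h => hf i (Finset.mem_insert_of_mem h))

lemma myRatFinsetLcm {ι : Type*} [DecidableEq ι] (s : Finset ι) (f : ι → ℕ)
    (hf : ∀ i ∈ s, f i ≠ 0) {q : ℚ} (hq : 0 < q) (h : ∀ i ∈ s, ∃ y : ℚ, q = y ^ f i) :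
    ∃ w : ℚ, q = w ^ s.lcm f := by
  induction s using Finset.induction with
  | empty => exact ⟨q, by simp⟩
  | insert _ _ hi ih =>
    rw [Finset.lcm_insert, lcm_eq_nat_lcm]
    exact myRatLcm hq (hf _ (Finset.mem_insert_self _ _))
      (myFinsetLcmNeZero _ _ fun i h => hf i (Finset.mem_insert_of_mem h))
      (h _ (Finset.mem_insert_self _ _))
      (ih (fun i h => hf i (Finset.mem_insert_of_mem h))
        (fun i h' => h i (Finset.mem_insert_of_mem h')))

lemma myGcdFinsetLcmDvd {ι : Type*} [DecidableEq ι] (s : Finset ι) (f : ι → ℕ)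
    (hf : ∀ i ∈ s, f i ≠ 0) {a : ℕ} (ha : a ≠ 0) :
    Nat.gcd a (s.lcm f) ∣ s.lcm fun i => Nat.gcd a (f i) := by
  induction s using Finset.induction with
  | empty => simp
  | insert _ _ hi ih =>
    rw [Finset.lcm_insert, Finset.lcm_insert, lcm_eq_nat_lcm, lcm_eq_nat_lcm]
    calc Nat.gcd a (Nat.lcm _ (Finset.lcm _ f))
        ∣ Nat.lcm (Nat.gcd a _) (Nat.gcd a (Finset.lcm _ f)) :=
          myGcdLcmDistribDvd ha (hf _ (Finset.mem_insert_self _ _))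
            (myFinsetLcmNeZero _ _ fun i h => hf i (Finset.mem_insert_of_mem h))
      _ ∣ Nat.lcm (Nat.gcd a _) (Finset.lcm _ fun i => Nat.gcd a (f i)) := by
          rw [← lcm_eq_nat_lcm]
          exact lcm_dvd_lcm dvd_rfl (ih fun i h => hf i (Finset.mem_insert_of_mem h))

lemma myBack : ∀ (k : ℕ) (n : Fin k → ℕ), (∀ m, 0 < n m) →
    ∀ t : Fin k → ℚ, (∀ m, 0 < t m) →
    (∀ κ lam : Fin k, ∃ y : ℚ, t κ / t lam = y ^ (Nat.gcd (n κ) (n lam))) →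
    ∃ x : ℚ, 0 < x ∧ ∀ m, ∃ y : ℚ, t m * x = y ^ (n m) := by
  intro k
  induction k with
  | zero => exact fun n _ t _ _ => ⟨1, one_pos, fun m => m.elim0⟩
  | succ k ih =>
    intro n hn t ht hpair
    obtain ⟨x', hx', hsol⟩ := ih (n ∘ Fin.succ) (fun m => hn _) (t ∘ Fin.succ)
      (fun m => ht _) (fun κ lam => hpair _ _)
    simp only [Function.comp] at hsol
    set L : ℕ := Finset.univ.lcm (fun i : Fin k => n i.succ) with hLdef
    have hLne : L ≠ 0 := myFinsetLcmNeZero _ _ fun i _ => (hn _).ne'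
    set q : ℚ := t 0 * x' with hqdef
    have hq : 0 < q := mul_pos (ht 0) hx'
    have hqi : ∀ i : Fin k, ∃ y : ℚ, q = y ^ (Nat.gcd (n 0) (n i.succ)) := by
      intro i
      obtain ⟨y1, hy1⟩ := hpair 0 i.succ
      obtain ⟨y2, hy2⟩ := hsol i
      refine ⟨y1 * y2 ^ (n i.succ / Nat.gcd (n 0) (n i.succ)), ?_⟩
      have hts : t i.succ ≠ 0 := (ht i.succ).ne'
      have hrw : q = (t 0 / t i.succ) * (t i.succ * x') := by
        field_simp [hqdef]
        ring
      rw [hrw, hy1, hy2, mul_pow, ← pow_mul, Nat.div_mul_cancel (Nat.gcd_dvd_right _ _)]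
    set G : ℕ := Finset.univ.lcm (fun i : Fin k => Nat.gcd (n 0) (n i.succ)) with hGdef
    obtain ⟨w0, hw0⟩ := myRatFinsetLcm Finset.univ (fun i : Fin k => Nat.gcd (n 0) (n i.succ))
      (fun i _ => Nat.gcd_ne_zero_left (hn 0).ne') hq (fun i _ => hqi i)
    obtain ⟨w, hwpos, hw⟩ := myPosWit hq hw0
    set g : ℕ := Nat.gcd (n 0) L with hgdef
    have hgG : g ∣ G := myGcdFinsetLcmDvd _ _ (fun i _ => (hn _).ne') (hn 0).ne'
    set w' : ℚ := w ^ (G / g) with hw'def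
    have hw'pos : 0 < w' := pow_pos hwpos _
    have hw'ne : w' ≠ 0 := hw'pos.ne'
    have hqg : q = w' ^ g := by
      rw [hw, hw'def, ← pow_mul, Nat.div_mul_cancel hgG]
    set u : ℤ := Nat.gcdA (n 0) L with hudef
    set v : ℤ := Nat.gcdB (n 0) L with hvdef
    have hbez : (g : ℤ) = n 0 * u + L * v := Nat.gcd_eq_gcd_ab (n 0) L
    refine ⟨x' * w' ^ (-((L : ℤ) * v)), mul_pos hx' (zpow_pos hw'pos _), ?_⟩
    intro m
    induction m using Fin.cases with
    | zero =>
      refine ⟨w' ^ u, ?_⟩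
      have h1 : t 0 * (x' * w' ^ (-((L : ℤ) * v))) = q * w' ^ (-((L : ℤ) * v)) := by
        rw [hqdef]; ring
      rw [h1, hqg, ← zpow_natCast w' g, ← zpow_add₀ hw'ne, ← zpow_natCast (w' ^ u) (n 0),
        ← zpow_mul]
      congr 1
      rw [hbez]; ring
    | succ i =>
      obtain ⟨y2, hy2⟩ := hsol i
      refine ⟨y2 * (w' ^ (-v)) ^ (L / n i.succ), ?_⟩
      have h1 : t i.succ * (x' * w' ^ (-((L : ℤ) * v))) =
          (t i.succ * x') * w' ^ (-((L : ℤ) * v)) := by ring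
      have h2 : w' ^ (-((L : ℤ) * v)) = ((w' ^ (-v)) ^ (L / n i.succ)) ^ (n i.succ) := by
        rw [← pow_mul, ← zpow_natCast (w' ^ (-v)), ← zpow_mul]
        congr 1
        have hdvd : L / n i.succ * n i.succ = L :=
          Nat.div_mul_cancel (Finset.dvd_lcm (Finset.mem_univ i))
        rw [hdvd]
        ring
      rw [h1, hy2, h2, ← mul_pow]

theorem stmt16 : ∀ (k : ℕ) (n : Fin k → ℕ), (∀ m, 0 < n m) →
    ∀ t : Fin k → ℚ, (∀ m, 0 < t m) →
    ((∃ x : ℚ, 0 < x ∧ ∀ m, ∃ y : ℚ, t m * x = y ^ (n m)) ↔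
      ∀ κ lam : Fin k, κ ≠ lam → ∃ y : ℚ, t κ / t lam = y ^ (Nat.gcd (n κ) (n lam))) := by
  intro k n hn t ht
  constructor
  · rintro ⟨x, hx, hsol⟩ κ lam _
    obtain ⟨yκ, hκ⟩ := hsol κ
    obtain ⟨yl, hl⟩ := hsol lam
    set g : ℕ := Nat.gcd (n κ) (n lam) with hgdef
    have hyl : yl ≠ 0 := by
      intro h0
      rw [h0, zero_pow (hn lam).ne'] at hl
      exact (mul_pos (ht lam) hx).ne' hl
    refine ⟨yκ ^ (n κ / g) / yl ^ (n lam / g), ?_⟩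
    have h1 : t κ / t lam = (t κ * x) / (t lam * x) := by
      rw [mul_div_mul_right _ _ hx.ne']
    rw [h1, hκ, hl, div_pow, ← pow_mul, ← pow_mul,
      Nat.div_mul_cancel (Nat.gcd_dvd_left _ _), Nat.div_mul_cancel (Nat.gcd_dvd_right _ _)]
  · intro hpair
    apply myBack k n hn t ht
    intro κ lam
    rcases eq_or_ne κ lam with rfl | hne
    · exact ⟨1, by rw [div_self (ht κ).ne', one_pow]⟩
    · exact hpair κ lam hne
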